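/- Let d ≥ 2, let A be a real d×d matrix, r ≥ 0, let μ be a Borel probability measure on [−r,0], and let x : [−r,∞) → ℝ^d be continuous, differentiable on (0,∞), with x(t) ∈ Δ_d for all t ≥ −r, satisfying the distributed-delay replicator equation x_i′(t) = x_i(t)·[(A x̄(t))_i − ⟨x(t), A x̄(t)⟩] for all t > 0 and all i ∈ {1,…,d}, where x̄(t) = ∫_{−r}^0 x(t+s) dμ(s). Assume the replicator ODE has no interior rest point, i.e., there is no q ∈ Δ_d with q_i > 0 for all i and (Aq)_1 = (Aq)_2 = ⋯ = (Aq)_d. Then liminf_{t→∞} min_{1≤i≤d} x_i(t) = 0; that is, the solution is not bounded away from the boundary of the simplex Δ_d. -/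

import Mathlib

open Filter MeasureTheory

lemma sep_lemma (d : ℕ) (hd : 2 ≤ d) (A : Matrix (Fin d) (Fin d) ℝ) (δ : ℝ) (hδ : 0 < δ)
    (hnorest : ¬∃ q ∈ stdSimplex ℝ (Fin d),
      (∀ i, 0 < q i) ∧ ∀ i j, A.mulVec q i = A.mulVec q j) :
    ∃ (ψ : (Fin d → ℝ) →ₗ[ℝ] ℝ) (u : ℝ), 0 < u ∧ (∀ m : ℝ, ψ (fun _ => m) = 0) ∧
      ∀ q ∈ stdSimplex ℝ (Fin d), (∀ i, δ ≤ q i) → u ≤ ψ (A.mulVec q) := by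
  have hd0 : (d : ℝ) ≠ 0 := by positivity
  set G : (Fin d → ℝ) →ₗ[ℝ] (Fin d → ℝ) :=
    LinearMap.id - (LinearMap.toSpanSingleton ℝ (Fin d → ℝ) (fun _ => (d:ℝ)⁻¹)).comp
      (∑ i, LinearMap.proj i) with hG
  have hGapply : ∀ v : Fin d → ℝ, ∀ i, G v i = v i - (∑ k, v k) * (d:ℝ)⁻¹ := by
    intro v i
    simp [hG, LinearMap.toSpanSingleton, LinearMap.sum_apply, LinearMap.proj, mul_comm]
  have hGconst : ∀ m : ℝ, G (fun _ => m) = 0 := by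
    intro m
    funext i
    rw [hGapply]
    simp only [Finset.sum_const, Finset.card_univ, Fintype.card_fin, nsmul_eq_mul, Pi.zero_apply]
    field_simp
    ring
  set K : Set (Fin d → ℝ) := stdSimplex ℝ (Fin d) ∩ {q | ∀ i, δ ≤ q i} with hK
  set F : (Fin d → ℝ) →ₗ[ℝ] (Fin d → ℝ) := G.comp A.mulVecLin with hF
  have hKconv : Convex ℝ K := by
    intro p hp q hq a b ha hb hab
    refine ⟨(convex_stdSimplex ℝ (Fin d)) hp.1 hq.1 ha hb hab, fun i => ?_⟩
    have h1 : a * δ + b * δ ≤ a * p i + b * q i := by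
      gcongr <;> first | exact hp.2 i | exact hq.2 i
    have h2 : δ = a * δ + b * δ := by linear_combination (-δ) * hab
    simpa [smul_eq_mul] using h2.trans_le h1
  have hKcomp : IsCompact K := by
    refine (isCompact_stdSimplex ℝ (Fin d)).of_isClosed_subset ?_ Set.inter_subset_left
    refine IsClosed.inter (isClosed_stdSimplex ℝ (Fin d)) ?_
    have : {q : Fin d → ℝ | ∀ i, δ ≤ q i} = ⋂ i, {q | δ ≤ q i} := by ext; simp
    rw [this]
    exact isClosed_iInter fun i => isClosed_le continuous_const (continuous_apply i)
  have hFcont : Continuous F := F.continuous_of_finiteDimensional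
  have hScomp : IsCompact (F '' K) := hKcomp.image hFcont
  have hSconv : Convex ℝ (F '' K) := hKconv.linear_image F
  have hzero : (0 : Fin d → ℝ) ∉ F '' K := by
    rintro ⟨q, ⟨hqs, hqδ⟩, hq0⟩
    apply hnorest
    refine ⟨q, hqs, fun i => lt_of_lt_of_le hδ (hqδ i), fun i j => ?_⟩
    have hi := congrFun hq0 i
    have hj := congrFun hq0 j
    rw [hF] at hi hj
    simp only [LinearMap.comp_apply] at hi hj
    rw [hGapply] at hi hj
    simp only [Pi.zero_apply] at hi hj
    have h1 : A.mulVec q i = (∑ k, (A.mulVecLin q) k) * (d:ℝ)⁻¹ := by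
      have := sub_eq_zero.mp hi; simpa [Matrix.mulVecLin_apply] using this
    have h2 : A.mulVec q j = (∑ k, (A.mulVecLin q) k) * (d:ℝ)⁻¹ := by
      have := sub_eq_zero.mp hj; simpa [Matrix.mulVecLin_apply] using this
    rw [h1, h2]
  obtain ⟨f, u, hfu, hub⟩ := geometric_hahn_banach_point_closed hSconv hScomp.isClosed hzero
  refine ⟨(f.toLinearMap).comp G, u, by simpa using hfu, fun m => by simp [hGconst m], ?_⟩
  intro q hq hqδ
  have : u < f (F q) := hub _ ⟨q, ⟨hq, hqδ⟩, rfl⟩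
  rw [hF] at this
  simp only [LinearMap.comp_apply] at this ⊢
  exact le_of_lt (by simpa [Matrix.mulVecLin_apply] using this)

lemma psi_sum (d : ℕ) (ψ : (Fin d → ℝ) →ₗ[ℝ] ℝ) (v : Fin d → ℝ) :
    ψ v = ∑ i, v i * ψ (Pi.single i 1) := by
  have hv : v = ∑ i, v i • (Pi.single i 1 : Fin d → ℝ) := by
    funext j
    simp [Pi.single_apply]
  conv_lhs => rw [hv]
  rw [map_sum]
  congr 1; funext i
  rw [_root_.map_smul, smul_eq_mul]

theorem stmt_11 (d : ℕ) (hd : 2 ≤ d) (A : Matrix (Fin d) (Fin d) ℝ) (r : ℝ) (hr : 0 ≤ r)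
    (μ : Measure ℝ) [IsProbabilityMeasure μ] (hμ : μ (Set.Icc (-r) 0) = 1)
    (x : ℝ → Fin d → ℝ)
    (hxcont : ContinuousOn x (Set.Ici (-r)))
    (hxsimplex : ∀ t : ℝ, -r ≤ t → x t ∈ stdSimplex ℝ (Fin d))
    (hode : ∀ t : ℝ, 0 < t →
      HasDerivAt x
        (fun i =>
          x t i *
            (A.mulVec (∫ s in Set.Icc (-r) (0:ℝ), x (t + s) ∂μ) i -
              ∑ k, x t k * A.mulVec (∫ s in Set.Icc (-r) (0:ℝ), x (t + s) ∂μ) k))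
        t)
    (hnorest : ¬∃ q ∈ stdSimplex ℝ (Fin d),
      (∀ i, 0 < q i) ∧ ∀ i j, A.mulVec q i = A.mulVec q j) :
    Filter.liminf (fun t : ℝ => ⨅ i, x t i) atTop = 0 := by
  haveI : Nonempty (Fin d) := ⟨⟨0, by omega⟩⟩
  set f : ℝ → ℝ := fun t => ⨅ i, x t i with hf
  have hbddBelow : ∀ t : ℝ, BddBelow (Set.range (x t)) :=
    fun t => (Set.finite_range _).bddBelow
  have hx01 : ∀ t : ℝ, -r ≤ t → ∀ i, 0 ≤ x t i ∧ x t i ≤ 1 := by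
    intro t ht i
    obtain ⟨hnn, hsum⟩ := hxsimplex t ht
    refine ⟨hnn i, ?_⟩
    calc x t i ≤ ∑ k, x t k := Finset.single_le_sum (fun k _ => hnn k) (Finset.mem_univ i)
    _ = 1 := hsum
  have hf0 : ∀ t : ℝ, -r ≤ t → 0 ≤ f t := by
    intro t ht
    exact le_ciInf fun i => (hx01 t ht i).1
  have hf1 : ∀ t : ℝ, -r ≤ t → f t ≤ 1 := by
    intro t ht
    exact le_trans (ciInf_le (hbddBelow t) (Classical.arbitrary _))
      (hx01 t ht (Classical.arbitrary _)).2
  have hlb : ∀ᶠ t in atTop, 0 ≤ f t :=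
    (eventually_ge_atTop (-r)).mono fun t ht => hf0 t ht
  have hub : ∀ᶠ t in atTop, f t ≤ 1 :=
    (eventually_ge_atTop (-r)).mono fun t ht => hf1 t ht
  have hbddle : IsBoundedUnder (· ≤ ·) atTop f := isBoundedUnder_of_eventually_le hub
  have hbddge : IsBoundedUnder (· ≥ ·) atTop f := isBoundedUnder_of_eventually_ge hlb
  refine le_antisymm ?_ (le_liminf_of_le hbddle.isCoboundedUnder_ge hlb)
  by_contra hcon
  push_neg at hcon
  set L := liminf f atTop with hL
  have hLpos : 0 < L := hcon
  set δ : ℝ := L / 2 with hδdef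
  have hδpos : 0 < δ := by positivity
  have hev : ∀ᶠ t in atTop, δ < f t := eventually_lt_of_lt_liminf (by linarith) hbddge
  obtain ⟨T₁, hT₁⟩ := eventually_atTop.mp (hev.and (eventually_ge_atTop 0))
  have hT₁0 : 0 ≤ T₁ := (hT₁ T₁ le_rfl).2
  have hxδ : ∀ t, T₁ ≤ t → ∀ i, δ ≤ x t i := by
    intro t ht i
    exact le_of_lt (lt_of_lt_of_le (hT₁ t ht).1 (ciInf_le (hbddBelow t) i))
  -- the delayed average
  set B : ℝ → Fin d → ℝ := fun t => ∫ s in Set.Icc (-r) (0:ℝ), x (t + s) ∂μ with hB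
  have hμ1 : (μ (Set.Icc (-r) (0:ℝ))).toReal = 1 := by rw [hμ]; simp
  have hcontB : ∀ t : ℝ, 0 ≤ t → ContinuousOn (fun s => x (t + s)) (Set.Icc (-r) (0:ℝ)) := by
    intro t ht
    refine hxcont.comp ((continuous_const.add continuous_id).continuousOn) ?_
    intro s hs
    simp only [Set.mem_Icc] at hs
    have h' : -r ≤ t + s := by linarith [hs.1]
    simpa using h'
  have hint : ∀ t : ℝ, 0 ≤ t → IntegrableOn (fun s => x (t + s)) (Set.Icc (-r) (0:ℝ)) μ :=
    fun t ht => (hcontB t ht).integrableOn_compact isCompact_Icc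
  have hinti : ∀ t : ℝ, 0 ≤ t → ∀ i,
      IntegrableOn (fun s => x (t + s) i) (Set.Icc (-r) (0:ℝ)) μ := by
    intro t ht i
    exact ((continuous_apply i).comp_continuousOn (hcontB t ht)).integrableOn_compact
      isCompact_Icc
  have hBcoord : ∀ t : ℝ, 0 ≤ t → ∀ i,
      B t i = ∫ s in Set.Icc (-r) (0:ℝ), x (t + s) i ∂μ := by
    intro t ht i
    have := (ContinuousLinearMap.proj (R := ℝ) (φ := fun _ : Fin d => ℝ) i).integral_comp_comm
      (hint t ht)
    exact this.symm
  have hBsum : ∀ t : ℝ, 0 ≤ t → ∑ i, B t i = 1 := by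
    intro t ht
    have h1 : ∑ i, B t i = ∫ s in Set.Icc (-r) (0:ℝ), (∑ i, x (t + s) i) ∂μ := by
      rw [integral_finset_sum _ (fun i _ => hinti t ht i)]
      exact Finset.sum_congr rfl fun i _ => hBcoord t ht i
    rw [h1, setIntegral_congr_fun measurableSet_Icc (g := fun _ => (1:ℝ))]
    · rw [setIntegral_const, measureReal_def, hμ1, one_smul]
    · intro s hs
      simp only [Set.mem_Icc] at hs
      exact (hxsimplex (t + s) (by linarith [hs.1])).2
  have hBδ : ∀ t : ℝ, T₁ + r ≤ t → ∀ i, δ ≤ B t i := by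
    intro t ht i
    have ht0 : 0 ≤ t := by linarith
    rw [hBcoord t ht0 i]
    have : ∫ s in Set.Icc (-r) (0:ℝ), (δ : ℝ) ∂μ ≤ ∫ s in Set.Icc (-r) (0:ℝ), x (t + s) i ∂μ := by
      refine setIntegral_mono_on ((integrableOn_const_iff (C := δ)).mpr (Or.inr ?_)) (hinti t ht0 i)
        measurableSet_Icc ?_
      · rw [hμ]; exact ENNReal.one_lt_top
      · intro s hs
        simp only [Set.mem_Icc] at hs
        exact hxδ (t + s) (by linarith [hs.1]) i
    calc δ = (μ (Set.Icc (-r) (0:ℝ))).toReal • δ := by rw [hμ1, one_smul]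
    _ = ∫ s in Set.Icc (-r) (0:ℝ), (δ : ℝ) ∂μ := (setIntegral_const δ).symm
    _ ≤ _ := this
  have hBsimplex : ∀ t : ℝ, T₁ + r ≤ t → B t ∈ stdSimplex ℝ (Fin d) := by
    intro t ht
    exact ⟨fun i => le_trans hδpos.le (hBδ t ht i), hBsum t (by linarith)⟩
  -- separation
  obtain ⟨ψ, u, hu, hψconst, hψsep⟩ := sep_lemma d hd A δ hδpos hnorest
  set c : Fin d → ℝ := fun i => ψ (Pi.single i 1) with hc
  have hcsum : ∑ i, c i = 0 := by
    have h1 := psi_sum d ψ (fun _ => (1:ℝ))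
    rw [hψconst 1] at h1
    simpa using h1.symm
  set T₀ : ℝ := T₁ + r + 1 with hT₀
  set V : ℝ → ℝ := fun τ => ∑ i, c i * Real.log (x τ i) with hV
  set W : ℝ → ℝ := fun τ => V τ - u * τ with hW
  have hVderiv : ∀ t : ℝ, T₀ ≤ t → HasDerivAt V (ψ (A.mulVec (B t))) t := by
    intro t ht
    have ht0 : 0 < t := by linarith
    have htT₁ : T₁ ≤ t := by linarith
    have hodeB : HasDerivAt x
        (fun i => x t i * (A.mulVec (B t) i - ∑ k, x t k * A.mulVec (B t) k)) t := hode t ht0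
    set m : ℝ := ∑ k, x t k * A.mulVec (B t) k with hm
    have hx' : ∀ i, HasDerivAt (fun τ => x τ i)
        (x t i * (A.mulVec (B t) i - m)) t := fun i => hasDerivAt_pi.mp hodeB i
    have hxpos : ∀ i, 0 < x t i := fun i => lt_of_lt_of_le hδpos (hxδ t htT₁ i)
    have hlog : ∀ i, HasDerivAt (fun τ => Real.log (x τ i)) (A.mulVec (B t) i - m) t := by
      intro i
      have h := (hx' i).log (ne_of_gt (hxpos i))
      rwa [mul_div_cancel_left₀ _ (ne_of_gt (hxpos i))] at h
    have hsum : HasDerivAt V (∑ i, c i * (A.mulVec (B t) i - m)) t :=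
      HasDerivAt.fun_sum (fun i _ => (hlog i).const_mul (c i))
    have heq : ∑ i, c i * (A.mulVec (B t) i - m) = ψ (A.mulVec (B t)) := by
      have h1 : ψ (A.mulVec (B t)) = ∑ i, A.mulVec (B t) i * c i := psi_sum d ψ _
      have h2 : ∑ i, c i * (A.mulVec (B t) i - m)
          = (∑ i, A.mulVec (B t) i * c i) - m * (∑ i, c i) := by
        rw [Finset.mul_sum, ← Finset.sum_sub_distrib]
        exact Finset.sum_congr rfl fun i _ => by ring
      rw [h2, hcsum, mul_zero, sub_zero, h1]
    rwa [heq] at hsum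
  have hWderiv : ∀ t : ℝ, T₀ ≤ t → HasDerivAt W (ψ (A.mulVec (B t)) - u) t := by
    intro t ht
    have := (hVderiv t ht).sub ((hasDerivAt_id t).const_mul u)
    simp at this; exact this
  have hmono : MonotoneOn W (Set.Ici T₀) := by
    refine monotoneOn_of_deriv_nonneg (convex_Ici T₀)
      (fun t ht => (hWderiv t ht).continuousAt.continuousWithinAt)
      (fun t ht => (hWderiv t (interior_subset ht)).differentiableAt.differentiableWithinAt)
      (fun t ht => ?_)
    rw [(hWderiv t (interior_subset ht)).deriv]
    have htT : T₁ + r ≤ t := by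
      have : t ∈ Set.Ici T₀ := interior_subset ht
      simp only [Set.mem_Ici] at this
      linarith
    exact sub_nonneg.mpr (hψsep (B t) (hBsimplex t htT) (hBδ t htT))
  -- bound on V
  have hδ1 : δ ≤ 1 := le_trans (hxδ T₀ (by linarith) (Classical.arbitrary _))
    (hx01 T₀ (by linarith) (Classical.arbitrary _)).2
  set C : ℝ := ∑ i, |c i| * (-Real.log δ) with hC
  have hVle : ∀ t : ℝ, T₀ ≤ t → V t ≤ C := by
    intro t ht
    have htT₁ : T₁ ≤ t := by linarith
    calc V t ≤ |V t| := le_abs_self _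
    _ ≤ ∑ i, |c i * Real.log (x t i)| := Finset.abs_sum_le_sum_abs _ _
    _ ≤ C := by
        refine Finset.sum_le_sum fun i _ => ?_
        rw [abs_mul]
        refine mul_le_mul_of_nonneg_left ?_ (abs_nonneg _)
        have h1 : Real.log δ ≤ Real.log (x t i) := Real.log_le_log hδpos (hxδ t htT₁ i)
        have h2 : Real.log (x t i) ≤ 0 :=
          Real.log_nonpos (hx01 t (by linarith) i).1 (hx01 t (by linarith) i).2
        have h3 : Real.log δ ≤ 0 := Real.log_nonpos hδpos.le hδ1
        rw [abs_le]
        constructor <;> linarith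
  obtain ⟨n, hn⟩ := exists_nat_gt ((C - V T₀) / u)
  have hmem : (T₀ + n : ℝ) ∈ Set.Ici T₀ := by
    simp only [Set.mem_Ici]
    have : (0:ℝ) ≤ n := Nat.cast_nonneg n
    linarith
  have h1 : W T₀ ≤ W (T₀ + n) := hmono (Set.self_mem_Ici) hmem (by simpa using hmem)
  have h2 : V (T₀ + n) ≤ C := hVle _ (by simpa using hmem)
  have h3 : C - V T₀ < n * u := (div_lt_iff₀ hu).mp hn
  simp only [hW] at h1
  have : V T₀ - u * T₀ ≤ V (T₀ + n) - u * (T₀ + n) := h1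
  nlinarith
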